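/- Let R be a finite chain ring with uniformizer π and nilpotency index r. For any A ∈ M_{n×2n}(R), there exists a unique tuple (n_1, ..., n_r) of nonnegative integers with n_1 + ... + n_r ≤ n such that A = U · D_{(n_1,...,n_r)} · V for some U ∈ GL_n(R) and V ∈ GL_{2n}(R), where D_{(n_1,...,n_r)} is the n×2n diagonal matrix with n_1 entries equal to π^{r-1}, then n_2 entries equal to π^{r-2}, ..., then n_r entries equal to 1, and zeros elsewhere. -/

import Mathlib

/-- The list of diagonal entries `π^(r-1)` (`ν 0` times), `π^(r-2)` (`ν 1` times), ...,
`π^0 = 1` (`ν (r-1)` times). -/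
def smithDiagEntries {R : Type*} [CommRing R] (π : R) (r : ℕ) (ν : Fin r → ℕ) : List R :=
  (List.ofFn fun i : Fin r => List.replicate (ν i) (π ^ (r - 1 - (i : ℕ)))).flatten

/-- The `n × 2n` diagonal matrix `D_{(n_1,…,n_r)}` with `ν 0` entries `π^(r-1)`,
`ν 1` entries `π^(r-2)`, ..., `ν (r-1)` entries `1`, and zeros elsewhere. -/
def smithDiag {R : Type*} [CommRing R] (π : R) (r n : ℕ) (ν : Fin r → ℕ) :
    Matrix (Fin n) (Fin (2 * n)) R :=
  Matrix.of fun i j =>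
    if (i : ℕ) = (j : ℕ) then (smithDiagEntries π r ν).getD (i : ℕ) 0 else 0

section Chain
variable {R : Type*} [CommRing R] [IsLocalRing R]
  (π : R) (hπ : Ideal.span {π} = IsLocalRing.maximalIdeal R)
  (r : ℕ) (hr : π ^ r = 0) (hr' : π ^ (r - 1) ≠ 0)

include hπ hr in
/-- Every element of a chain ring is a unit times a power of π. -/
theorem chain_exists_unit_pow : ∀ x : R, ∃ k ≤ r, ∃ u : Rˣ, x = ↑u * π ^ k := by
  have key : ∀ d : ℕ, ∀ x : R, π ^ (r - d) ∣ x → ∃ k ≤ r, ∃ u : Rˣ, x = ↑u * π ^ k := by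
    intro d
    induction d with
    | zero =>
      intro x hx
      obtain ⟨c, rfl⟩ := hx
      exact ⟨r, le_rfl, 1, by simp [hr]⟩
    | succ d ih =>
      intro x hx
      obtain ⟨c, rfl⟩ := hx
      by_cases hc : IsUnit c
      · obtain ⟨u, rfl⟩ := hc
        exact ⟨r - (d+1), Nat.sub_le _ _, u, by ring⟩
      · have hcm : c ∈ IsLocalRing.maximalIdeal R := hc
        rw [← hπ, Ideal.mem_span_singleton] at hcm
        obtain ⟨c', rfl⟩ := hcm
        refine ih _ ?_
        have h1 : π ^ (r - d) ∣ π ^ (r - (d+1)) * π := by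
          rw [← pow_succ]
          exact pow_dvd_pow _ (by omega)
        have h2 : π ^ (r - (d+1)) * (π * c') = (π ^ (r - (d+1)) * π) * c' := by ring
        rw [h2]
        exact h1.mul_right c'
  intro x
  exact key r x (by simp)

omit [IsLocalRing R] in include hr' in
theorem chain_pow_ne_zero (j : ℕ) (hj : j < r) : π ^ j ≠ 0 := by
  intro h
  apply hr'
  have : π ^ (r - 1) = π ^ j * π ^ (r - 1 - j) := by
    rw [← pow_add]; congr 1; omega
  rw [this, h, zero_mul]

end Chain

section MatrixTools
variable {R : Type*} [CommRing R]

lemma permL_mul {m k : ℕ} (e : Fin m ≃ Fin m) (A : Matrix (Fin m) (Fin k) R) :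
    (1 : Matrix (Fin m) (Fin m) R).submatrix e id * A = A.submatrix e id := by
  ext i j
  rw [Matrix.mul_apply]
  simp [Matrix.one_apply, ite_mul]

lemma mul_permR {m k : ℕ} (f : Fin k ≃ Fin k) (A : Matrix (Fin m) (Fin k) R) :
    A * (1 : Matrix (Fin k) (Fin k) R).submatrix id f = A.submatrix id f := by
  ext i j
  rw [Matrix.mul_apply]
  simp [Matrix.one_apply, mul_ite]

def permUnitL {m : ℕ} (e : Fin m ≃ Fin m) : (Matrix (Fin m) (Fin m) R)ˣ where
  val := (1 : Matrix (Fin m) (Fin m) R).submatrix e id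
  inv := (1 : Matrix (Fin m) (Fin m) R).submatrix e.symm id
  val_inv := by rw [permL_mul]; ext i j; simp [Matrix.one_apply]
  inv_val := by rw [permL_mul]; ext i j; simp [Matrix.one_apply]

def permUnitR {k : ℕ} (f : Fin k ≃ Fin k) : (Matrix (Fin k) (Fin k) R)ˣ where
  val := (1 : Matrix (Fin k) (Fin k) R).submatrix id f
  inv := (1 : Matrix (Fin k) (Fin k) R).submatrix id f.symm
  val_inv := by rw [mul_permR]; ext i j; simp [Matrix.one_apply]
  inv_val := by rw [mul_permR]; ext i j; simp [Matrix.one_apply]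

lemma submatrix_eq_permL_mul_permR {m k : ℕ} (e : Fin m ≃ Fin m) (f : Fin k ≃ Fin k)
    (A : Matrix (Fin m) (Fin k) R) :
    A.submatrix e f = (permUnitL (R := R) e).val * A * (permUnitR (R := R) f).val := by
  rw [permUnitL, permUnitR]
  rw [permL_mul, mul_permR]
  ext i j
  simp

end MatrixTools

section Blocks
variable {R : Type*} [CommRing R]

def cornerBlock {s t : ℕ} (x : R) (M : Matrix (Fin s) (Fin t) R) :
    Matrix (Fin (s+1)) (Fin (t+1)) R :=
  Matrix.of fun i j =>
    Fin.cases (Fin.cases x (fun _ => 0) j) (fun i' => Fin.cases 0 (fun j' => M i' j') j) i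

@[simp] lemma cornerBlock_zero_zero {s t : ℕ} (x : R) (M : Matrix (Fin s) (Fin t) R) :
    cornerBlock x M 0 0 = x := rfl

@[simp] lemma cornerBlock_zero_succ {s t : ℕ} (x : R) (M : Matrix (Fin s) (Fin t) R)
    (j : Fin t) : cornerBlock x M 0 j.succ = 0 := rfl

@[simp] lemma cornerBlock_succ_zero {s t : ℕ} (x : R) (M : Matrix (Fin s) (Fin t) R)
    (i : Fin s) : cornerBlock x M i.succ 0 = 0 := rfl

@[simp] lemma cornerBlock_succ_succ {s t : ℕ} (x : R) (M : Matrix (Fin s) (Fin t) R)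
    (i : Fin s) (j : Fin t) : cornerBlock x M i.succ j.succ = M i j := rfl

lemma cornerBlock_mul {s t u : ℕ} (x y : R) (M : Matrix (Fin s) (Fin t) R)
    (N : Matrix (Fin t) (Fin u) R) :
    cornerBlock x M * cornerBlock y N = cornerBlock (x * y) (M * N) := by
  ext i j
  rw [Matrix.mul_apply, Fin.sum_univ_succ]
  induction i using Fin.cases <;> induction j using Fin.cases <;>
    simp [Matrix.mul_apply]

lemma cornerBlock_one {s : ℕ} :
    cornerBlock (1 : R) (1 : Matrix (Fin s) (Fin s) R) = 1 := by
  ext i j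
  induction i using Fin.cases <;> induction j using Fin.cases <;>
    simp [Matrix.one_apply, Fin.succ_ne_zero, (Fin.succ_ne_zero _).symm, Fin.succ_inj]

def cornerUnit {s : ℕ} (u : Rˣ) (U : (Matrix (Fin s) (Fin s) R)ˣ) :
    (Matrix (Fin (s+1)) (Fin (s+1)) R)ˣ where
  val := cornerBlock (u : R) U.val
  inv := cornerBlock ((u⁻¹ : Rˣ) : R) U⁻¹.val
  val_inv := by rw [cornerBlock_mul]; simp [cornerBlock_one]
  inv_val := by rw [cornerBlock_mul]; simp [cornerBlock_one]

def colHit {s : ℕ} (w : Fin (s+1) → R) : Matrix (Fin (s+1)) (Fin (s+1)) R :=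
  Matrix.of fun a b => if b = 0 then w a else 0

def rowHit {t : ℕ} (v : Fin (t+1) → R) : Matrix (Fin (t+1)) (Fin (t+1)) R :=
  Matrix.of fun a b => if a = 0 then v b else 0

lemma colHit_mul_colHit {s : ℕ} (w w' : Fin (s+1) → R) (hw : w' 0 = 0) :
    colHit w * colHit w' = 0 := by
  ext a b
  rw [Matrix.mul_apply]
  simp [colHit, ite_mul, mul_ite, hw, Finset.sum_ite_eq]

lemma rowHit_mul_rowHit {t : ℕ} (v v' : Fin (t+1) → R) (hv : v 0 = 0) :
    rowHit v * rowHit v' = 0 := by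
  ext a b
  rw [Matrix.mul_apply]
  simp [rowHit, ite_mul, mul_ite, hv, Finset.sum_ite_eq]

def addColUnit {s : ℕ} (w : Fin (s+1) → R) (hw : w 0 = 0) :
    (Matrix (Fin (s+1)) (Fin (s+1)) R)ˣ where
  val := 1 + colHit w
  inv := 1 - colHit w
  val_inv := by
    rw [mul_sub, add_mul, add_mul, mul_one, mul_one, one_mul,
      colHit_mul_colHit w w hw]
    abel
  inv_val := by
    rw [sub_mul, mul_add, mul_add, mul_one, mul_one, one_mul,
      colHit_mul_colHit w w hw]
    abel

def addRowUnit {t : ℕ} (v : Fin (t+1) → R) (hv : v 0 = 0) :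
    (Matrix (Fin (t+1)) (Fin (t+1)) R)ˣ where
  val := 1 + rowHit v
  inv := 1 - rowHit v
  val_inv := by
    rw [mul_sub, add_mul, add_mul, mul_one, mul_one, one_mul,
      rowHit_mul_rowHit v v hv]
    abel
  inv_val := by
    rw [sub_mul, mul_add, mul_add, mul_one, mul_one, one_mul,
      rowHit_mul_rowHit v v hv]
    abel

lemma addColUnit_mul_apply {s k : ℕ} (w : Fin (s+1) → R) (hw : w 0 = 0)
    (B : Matrix (Fin (s+1)) (Fin k) R) (i : Fin (s+1)) (j : Fin k) :
    ((addColUnit w hw).val * B) i j = B i j + w i * B 0 j := by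
  have hval : (addColUnit w hw).val = 1 + colHit w := rfl
  rw [hval, Matrix.add_mul, Matrix.one_mul, Matrix.add_apply]
  congr 1
  rw [Matrix.mul_apply]
  simp [colHit, ite_mul, Finset.sum_ite_eq, Finset.sum_ite_eq']

lemma mul_addRowUnit_apply {t k : ℕ} (v : Fin (t+1) → R) (hv : v 0 = 0)
    (B : Matrix (Fin k) (Fin (t+1)) R) (i : Fin k) (j : Fin (t+1)) :
    (B * (addRowUnit v hv).val) i j = B i j + B i 0 * v j := by
  have hval : (addRowUnit v hv).val = 1 + rowHit v := rfl
  rw [hval, Matrix.mul_add, Matrix.mul_one, Matrix.add_apply]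
  congr 1
  rw [Matrix.mul_apply]
  simp [rowHit, mul_ite, Finset.sum_ite_eq, Finset.sum_ite_eq']

def scaleUnit {m : ℕ} (d : Fin m → Rˣ) : (Matrix (Fin m) (Fin m) R)ˣ where
  val := Matrix.diagonal fun i => (d i : R)
  inv := Matrix.diagonal fun i => ((d i)⁻¹ : Rˣ)
  val_inv := by rw [Matrix.diagonal_mul_diagonal]; simp
  inv_val := by rw [Matrix.diagonal_mul_diagonal]; simp

end Blocks

section Diag
variable {R : Type*} [CommRing R]

def diagP {m m' : ℕ} (f : Fin m → R) : Matrix (Fin m) (Fin m') R :=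
  Matrix.of fun i j => if (i : ℕ) = (j : ℕ) then f i else 0

lemma cornerBlock_diagP {m m' : ℕ} (x : R) (f : Fin m → R) :
    cornerBlock x (diagP (m' := m') f) = diagP (Fin.cons x f) := by
  ext i j
  induction i using Fin.cases <;> induction j using Fin.cases <;>
    simp [diagP, Fin.val_succ]

lemma pivot_step {mm tt : ℕ} (π : R) (k : ℕ) (A : Matrix (Fin (mm+1)) (Fin (tt+1)) R)
    (hp : ∃ (u : Rˣ) (i1 : Fin (mm+1)) (j1 : Fin (tt+1)), A i1 j1 = ↑u * π ^ k)
    (hdvd : ∀ i j, π ^ k ∣ A i j) :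
    ∃ (U0 : (Matrix (Fin (mm+1)) (Fin (mm+1)) R)ˣ)
      (V0 : (Matrix (Fin (tt+1)) (Fin (tt+1)) R)ˣ)
      (A₁ : Matrix (Fin mm) (Fin tt) R),
      U0.val * A * V0.val = cornerBlock (π ^ k) A₁ := by
  obtain ⟨u, i1, j1, hu⟩ := hp
  set Du : (Matrix (Fin (mm+1)) (Fin (mm+1)) R)ˣ :=
    scaleUnit (fun i => if i = 0 then u⁻¹ else 1) with hDu
  set B : Matrix (Fin (mm+1)) (Fin (tt+1)) R :=
    Du.val * (A.submatrix (Equiv.swap 0 i1) (Equiv.swap 0 j1)) with hBdef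
  have hBapp : ∀ i j, B i j =
      (if i = 0 then ((u⁻¹ : Rˣ) : R) else 1) * A (Equiv.swap 0 i1 i) (Equiv.swap 0 j1 j) := by
    intro i j
    rw [hBdef]
    have h1 : Du.val = Matrix.diagonal fun i => ((if i = 0 then u⁻¹ else 1 : Rˣ) : R) := rfl
    have h2 : (fun i : Fin (mm+1) => ((if i = 0 then u⁻¹ else 1 : Rˣ) : R)) =
        fun i => if i = 0 then ((u⁻¹:Rˣ):R) else 1 := by
      funext i; split <;> rfl
    rw [h1, h2, Matrix.diagonal_mul]
    simp
  have hB00 : B 0 0 = π ^ k := by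
    rw [hBapp]
    simp [Equiv.swap_apply_left, hu, ← mul_assoc]
  have hBd : ∀ i j, π ^ k ∣ B i j := by
    intro i j
    rw [hBapp]
    exact (hdvd _ _).mul_left _
  choose cj hcj using fun j => hBd 0 j
  choose ci hci using fun i => hBd i 0
  have hv0 : (fun j : Fin (tt+1) => if j = 0 then 0 else -(cj j)) 0 = 0 := by simp
  set v : Fin (tt+1) → R := fun j => if j = 0 then 0 else -(cj j) with hvdef
  set C : Matrix (Fin (mm+1)) (Fin (tt+1)) R := B * (addRowUnit v hv0).val with hCdef
  have hCapp : ∀ i j, C i j = B i j + B i 0 * v j := by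
    intro i j; rw [hCdef, mul_addRowUnit_apply]
  have hC00 : C 0 0 = π ^ k := by rw [hCapp, hvdef]; simp [hB00]
  have hC0succ : ∀ j : Fin tt, C 0 j.succ = 0 := by
    intro j
    rw [hCapp, hvdef, hB00, hcj]
    simp [Fin.succ_ne_zero, mul_comm]
  have hCi0 : ∀ i, C i 0 = B i 0 := by
    intro i; rw [hCapp, hvdef]; simp
  have hw0 : (fun i : Fin (mm+1) => if i = 0 then 0 else -(ci i)) 0 = 0 := by simp
  set w : Fin (mm+1) → R := fun i => if i = 0 then 0 else -(ci i) with hwdef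
  set G : Matrix (Fin (mm+1)) (Fin (tt+1)) R := (addColUnit w hw0).val * C with hGdef
  have hGapp : ∀ i j, G i j = C i j + w i * C 0 j := by
    intro i j; rw [hGdef, addColUnit_mul_apply]
  have hG00 : G 0 0 = π ^ k := by rw [hGapp, hwdef]; simp [hC00]
  have hG0succ : ∀ j : Fin tt, G 0 j.succ = 0 := by
    intro j; rw [hGapp, hwdef]; simp [hC0succ j]
  have hGsucc0 : ∀ i : Fin mm, G i.succ 0 = 0 := by
    intro i
    rw [hGapp, hwdef, hC00, hCi0, hci]
    simp [Fin.succ_ne_zero, mul_comm]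
  have hGsuccsucc : ∀ (i : Fin mm) (j : Fin tt),
      G i.succ j.succ = C i.succ j.succ := by
    intro i j; rw [hGapp, hC0succ j]; ring
  refine ⟨addColUnit w hw0 * Du * permUnitL (Equiv.swap 0 i1),
    permUnitR (Equiv.swap 0 j1) * addRowUnit v hv0,
    Matrix.of fun i j => G i.succ j.succ, ?_⟩
  have hseq : (addColUnit w hw0 * Du * permUnitL (Equiv.swap 0 i1)).val * A *
      (permUnitR (Equiv.swap 0 j1) * addRowUnit v hv0).val = G := by
    rw [hGdef, hCdef, hBdef]
    rw [submatrix_eq_permL_mul_permR]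
    simp only [Units.val_mul, Matrix.mul_assoc]
  rw [hseq]
  ext i j
  induction i using Fin.cases <;> induction j using Fin.cases <;>
    simp [hG00, hG0succ, hGsucc0, hGsuccsucc]

variable [IsLocalRing R]

theorem exists_diag (π : R) (hπ : Ideal.span {π} = IsLocalRing.maximalIdeal R)
    (r : ℕ) (hr : π ^ r = 0) :
    ∀ (m m' : ℕ) (A : Matrix (Fin m) (Fin m') R),
      ∃ (U : (Matrix (Fin m) (Fin m) R)ˣ) (V : (Matrix (Fin m') (Fin m') R)ˣ)
        (e : Fin m → ℕ), (∀ i, e i ≤ r) ∧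
        U.val * A * V.val = diagP (fun i => π ^ e i) := by
  intro m
  induction m with
  | zero =>
    intro m' A
    exact ⟨1, 1, fun i => i.elim0, fun i => i.elim0, by ext i j; exact i.elim0⟩
  | succ mm ih =>
    intro m' A
    match m' with
    | 0 =>
      exact ⟨1, 1, fun _ => r, fun _ => le_rfl, by ext i j; exact j.elim0⟩
    | (tt+1) =>
      classical
      have hP : ∃ k, ∃ i j, ∃ u : Rˣ, A i j = ↑u * π ^ k := by
        obtain ⟨k0, hk0, u0, hu0⟩ := chain_exists_unit_pow π hπ r hr (A 0 0)
        exact ⟨k0, 0, 0, u0, hu0⟩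
      set k := Nat.find hP with hkdef
      obtain ⟨i1, j1, u, hu⟩ := Nat.find_spec hP
      have hkr : k ≤ r := by
        obtain ⟨k0, hk0, u0, hu0⟩ := chain_exists_unit_pow π hπ r hr (A 0 0)
        exact le_trans (Nat.find_min' hP ⟨0, 0, u0, hu0⟩) hk0
      have hdvd : ∀ i j, π ^ k ∣ A i j := by
        intro i j
        obtain ⟨k', hk', u', hu'⟩ := chain_exists_unit_pow π hπ r hr (A i j)
        have : k ≤ k' := Nat.find_min' hP ⟨i, j, u', hu'⟩
        rw [hu']
        exact (pow_dvd_pow π this).mul_left _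
      obtain ⟨U0, V0, A₁, hA₁⟩ := pivot_step π k A ⟨u, i1, j1, hu⟩ hdvd
      obtain ⟨U₁, V₁, e₁, he₁, hU₁⟩ := ih tt A₁
      refine ⟨cornerUnit 1 U₁ * U0, V0 * cornerUnit 1 V₁, Fin.cons k e₁, ?_, ?_⟩
      · intro i
        induction i using Fin.cases with
        | zero => simpa using hkr
        | succ i => simpa using he₁ i
      · have : (cornerUnit 1 U₁ * U0).val * A * (V0 * cornerUnit 1 V₁).val =
            (cornerUnit 1 U₁).val * (U0.val * A * V0.val) * (cornerUnit 1 V₁).val := by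
          simp only [Units.val_mul, Matrix.mul_assoc]
        rw [this, hA₁]
        have hcu : (cornerUnit (1 : Rˣ) U₁).val = cornerBlock (1 : R) U₁.val := rfl
        have hcv : (cornerUnit (1 : Rˣ) V₁).val = cornerBlock (1 : R) V₁.val := rfl
        rw [hcu, hcv, cornerBlock_mul, cornerBlock_mul]
        have h3 : (fun i => π ^ Fin.cons k e₁ i) = Fin.cons (π ^ k) (fun i => π ^ e₁ i) := by
          funext i; induction i using Fin.cases <;> simp
        rw [h3, ← cornerBlock_diagP, one_mul, mul_one, hU₁]
  
end Diag

section Card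
variable {R : Type*} [CommRing R]

/-- `Nat.card` of the annihilator of `π ^ m`. -/
noncomputable def annCard (π : R) (m : ℕ) : ℕ := Nat.card {x : R // π ^ m * x = 0}

lemma annCard_zero (π : R) : annCard π 0 = 1 := by
  rw [annCard]
  have e : {x : R // π ^ 0 * x = 0} ≃ PUnit.{1} :=
    { toFun := fun _ => PUnit.unit
      invFun := fun _ => ⟨0, by simp⟩
      left_inv := fun x => by
        ext
        have := x.2
        simpa using this.symm
      right_inv := fun _ => rfl }
  rw [Nat.card_congr e]
  simp

lemma annCard_of_pow_eq_zero (π : R) (m : ℕ) (h : π ^ m = 0) :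
    annCard π m = Nat.card R := by
  rw [annCard]
  exact Nat.card_congr (Equiv.subtypeUnivEquiv (by simp [h]))

variable [IsLocalRing R]
variable (π : R) (hπ : Ideal.span {π} = IsLocalRing.maximalIdeal R)
  (r : ℕ) (hr : π ^ r = 0) (hr' : π ^ (r - 1) ≠ 0)

include hr' in
lemma chain_le_of_pow_eq_zero (t : ℕ) (ht : π ^ t = 0) : r ≤ t := by
  by_contra h
  exact chain_pow_ne_zero π r hr' t (by omega) ht

include hπ hr hr' in
lemma annCard_succ (m : ℕ) (hm : m + 1 ≤ r) :
    annCard π (m + 1) = annCard π m * annCard π 1 := by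
  classical
  set G : AddSubgroup R :=
    { carrier := {x | π ^ (m+1) * x = 0}
      add_mem' := fun {a b} ha hb => by
        simp only [Set.mem_setOf_eq] at *
        rw [mul_add, ha, hb, add_zero]
      zero_mem' := by simp
      neg_mem' := fun {a} ha => by
        simp only [Set.mem_setOf_eq] at *
        rw [mul_neg, ha, neg_zero] } with hGdef
  have hGmem : ∀ x : R, x ∈ G ↔ π ^ (m+1) * x = 0 := fun x => Iff.rfl
  set f : G →+ R :=
    { toFun := fun x => π ^ m * (x : R)
      map_zero' := by simp
      map_add' := fun a b => by
        show π ^ m * ((a : R) + (b : R)) = _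
        ring } with hfdef
  have hfapp : ∀ x : G, f x = π ^ m * (x : R) := fun _ => rfl
  have hker : Nat.card f.ker = annCard π m := by
    apply Nat.card_congr
    exact
      { toFun := fun x => ⟨(x.1 : R), x.2⟩
        invFun := fun y => ⟨⟨y.1, by
            rw [hGmem, pow_succ, mul_comm (π ^ m) π, mul_assoc, y.2, mul_zero]⟩,
          y.2⟩
        left_inv := fun x => by ext; rfl
        right_inv := fun y => rfl }
  have hrange : Nat.card f.range = annCard π 1 := by
    apply Nat.card_congr
    have hiff : ∀ y : R, y ∈ f.range ↔ π ^ 1 * y = 0 := by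
      intro y
      constructor
      · rintro ⟨x, rfl⟩
        rw [hfapp, pow_one, ← mul_assoc, ← pow_succ']
        exact x.2
      · intro hy
        obtain ⟨j, hj, u, hu⟩ := chain_exists_unit_pow π hπ r hr y
        have hju : (u : R) * π ^ (j + 1) = 0 := by
          rw [pow_succ, ← mul_assoc, ← hu, mul_comm, ← pow_one π]
          exact hy
        have hj1 : π ^ (j + 1) = 0 := by
          have := congrArg (fun z => ((u⁻¹ : Rˣ) : R) * z) hju
          simpa [← mul_assoc] using this
        have hrj : r ≤ j + 1 := chain_le_of_pow_eq_zero π r hr' _ hj1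
        have hmj : m ≤ j := by omega
        refine ⟨⟨(u : R) * π ^ (j - m), ?_⟩, ?_⟩
        · rw [hGmem, ← mul_assoc, mul_comm (π ^ (m+1)) (u : R), mul_assoc, ← pow_add]
          have : m + 1 + (j - m) = j + 1 := by omega
          rw [this, hj1, mul_zero]
        · rw [hfapp]
          show π ^ m * ((u : R) * π ^ (j - m)) = y
          rw [← mul_assoc, mul_comm (π ^ m) (u : R), mul_assoc, ← pow_add]
          have : m + (j - m) = j := by omega
          rw [this, hu]
    exact Equiv.subtypeEquivRight hiff
  have hann : annCard π (m+1) = Nat.card G :=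
    Nat.card_congr (Equiv.subtypeEquivRight fun x => (hGmem x).symm).symm
  rw [hann, AddSubgroup.card_eq_card_quotient_mul_card_addSubgroup f.ker,
    Nat.card_congr (QuotientAddGroup.quotientKerEquivRange f).toEquiv, hrange, hker,
    mul_comm]

include hπ hr hr' in
lemma annCard_eq_pow (m : ℕ) (hm : m ≤ r) : annCard π m = annCard π 1 ^ m := by
  induction m with
  | zero => simp [annCard_zero]
  | succ m ih =>
    rw [annCard_succ π hπ r hr hr' m hm, ih (by omega), pow_succ]

include hπ hr hr' in
lemma annCard_eq_pow_min (m : ℕ) : annCard π m = annCard π 1 ^ min m r := by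
  rcases le_total m r with h | h
  · rw [annCard_eq_pow π hπ r hr hr' m h, min_eq_left h]
  · rw [min_eq_right h, ← annCard_eq_pow π hπ r hr hr' r le_rfl,
      annCard_of_pow_eq_zero π m (by
        have : π ^ m = π ^ r * π ^ (m - r) := by rw [← pow_add]; congr 1; omega
        rw [this, hr, zero_mul]),
      annCard_of_pow_eq_zero π r hr]

include hr hr' in
lemma annCard_one_le [Fintype R] : 2 ≤ annCard π 1 := by
  have hrpos : 0 < r := by
    rcases Nat.eq_zero_or_pos r with h | h
    · exfalso; apply hr'; rw [h]; simpa [h] using hr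
    · exact h
  have h1 : Nontrivial {x : R // π ^ 1 * x = 0} := by
    refine ⟨⟨0, by simp⟩, ⟨π ^ (r - 1), ?_⟩, ?_⟩
    · rw [pow_one, ← pow_succ']
      have : r - 1 + 1 = r := by omega
      rw [this, hr]
    · intro h
      apply hr'
      have := congrArg (fun z => (z : {x : R // π ^ 1 * x = 0}).1) h.symm
      simpa using this
  have : Finite {x : R // π ^ 1 * x = 0} := Subtype.finite
  rw [annCard]
  exact Finite.one_lt_card_iff_nontrivial.mpr h1

end Card

section Inv
variable {R : Type*} [CommRing R]

noncomputable def cInv (π : R) (k : ℕ) {n n' : ℕ} (M : Matrix (Fin n) (Fin n') R) : ℕ :=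
  Nat.card {v : Fin n' → R // ∀ i, π ^ k * M.mulVec v i = 0}

lemma unit_mulVec_eq_zero {n : ℕ} (U : (Matrix (Fin n) (Fin n) R)ˣ) (y : Fin n → R)
    (hy : U.val.mulVec y = 0) : y = 0 := by
  have h := congrArg (fun z => (U⁻¹).val.mulVec z) hy
  simpa [Matrix.mulVec_mulVec, U.inv_mul] using h

lemma cInv_unit_mul {n n' : ℕ} (π : R) (k : ℕ) (M : Matrix (Fin n) (Fin n') R)
    (U : (Matrix (Fin n) (Fin n) R)ˣ) (V : (Matrix (Fin n') (Fin n') R)ˣ) :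
    cInv π k (U.val * M * V.val) = cInv π k M := by
  rw [cInv, cInv]
  apply Nat.card_congr
  have key : ∀ (x : Fin n' → R),
      ((∀ i, π ^ k * (U.val * M).mulVec x i = 0) ↔ ∀ i, π ^ k * M.mulVec x i = 0) := by
    intro x
    constructor
    · intro h i
      have h0 : U.val.mulVec (π ^ k • M.mulVec x) = 0 := by
        funext i'
        have := h i'
        rw [← Matrix.mulVec_mulVec] at this
        simpa [Matrix.mulVec_smul, Pi.smul_apply, smul_eq_mul] using this
      have h1 := unit_mulVec_eq_zero U _ h0
      have h2 := congrFun h1 i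
      simpa using h2
    · intro h i
      have h0 : π ^ k • M.mulVec x = 0 := by
        funext i'; simpa using h i'
      rw [← Matrix.mulVec_mulVec]
      have h3 : π ^ k * U.val.mulVec (M.mulVec x) i =
          U.val.mulVec (π ^ k • M.mulVec x) i := by
        rw [Matrix.mulVec_smul]
        simp
      rw [h3, h0]
      simp
  refine
    { toFun := fun v => ⟨V.val.mulVec v.1, ?_⟩
      invFun := fun w => ⟨(V⁻¹).val.mulVec w.1, ?_⟩
      left_inv := fun v => ?_
      right_inv := fun w => ?_ }
  · exact fun i =>
      (key (V.val.mulVec v.1)).mp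
        (fun i' => by rw [Matrix.mulVec_mulVec]; exact v.2 i') i
  · intro i
    rw [Matrix.mulVec_mulVec, Matrix.mul_assoc, V.mul_inv, Matrix.mul_one]
    exact (key w.1).mpr w.2 i
  · apply Subtype.ext
    show (V⁻¹).val.mulVec (V.val.mulVec v.1) = v.1
    rw [Matrix.mulVec_mulVec, V.inv_mul, Matrix.one_mulVec]
  · apply Subtype.ext
    show V.val.mulVec ((V⁻¹).val.mulVec w.1) = w.1
    rw [Matrix.mulVec_mulVec, V.mul_inv, Matrix.one_mulVec]

lemma diagP_mulVec {n : ℕ} (f : Fin n → R) (v : Fin (2*n) → R) (i : Fin n) :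
    (diagP f : Matrix (Fin n) (Fin (2*n)) R).mulVec v i
      = f i * v (Fin.castLE (by omega) i) := by
  rw [Matrix.mulVec, dotProduct]
  have h : ∀ j : Fin (2*n), (diagP f : Matrix (Fin n) (Fin (2*n)) R) i j * v j
      = if Fin.castLE (by omega : n ≤ 2*n) i = j then f i * v j else 0 := by
    intro j
    rw [diagP]
    simp only [Matrix.of_apply]
    by_cases hij : (i : ℕ) = (j : ℕ)
    · have hc : Fin.castLE (by omega : n ≤ 2*n) i = j := Fin.ext hij
      rw [if_pos hij, if_pos hc]
    · rw [if_neg hij, zero_mul,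
        if_neg (fun hc => hij (by simpa using congrArg Fin.val hc))]
  rw [Finset.sum_congr rfl fun j _ => h j]
  rw [Finset.sum_ite_eq]
  simp

lemma cInv_diagP {n : ℕ} (π : R) (k : ℕ) (f : Fin n → R) :
    cInv π k (diagP f : Matrix (Fin n) (Fin (2*n)) R)
      = (∏ i : Fin n, Nat.card {x : R // π ^ k * (f i * x) = 0}) * Nat.card R ^ n := by
  rw [cInv]
  have hcond : ∀ v : Fin (2*n) → R,
      (∀ i, π ^ k * (diagP f : Matrix (Fin n) (Fin (2*n)) R).mulVec v i = 0)
        ↔ ∀ i : Fin n, π ^ k * (f i * v (Fin.castLE (by omega) i)) = 0 := by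
    intro v
    constructor <;> intro h i <;> have hh := h i
    · rw [diagP_mulVec] at hh; exact hh
    · rw [diagP_mulVec]; exact hh
  have E : {v : Fin (2*n) → R // ∀ i, π ^ k * (diagP f : Matrix (Fin n) (Fin (2*n)) R).mulVec v i = 0}
      ≃ (∀ i : Fin n, {x : R // π ^ k * (f i * x) = 0}) × (Fin n → R) :=
    { toFun := fun v =>
        (fun i => ⟨v.1 (Fin.castLE (by omega) i), (hcond v.1).mp v.2 i⟩,
         fun i => v.1 ⟨n + i, by omega⟩)
      invFun := fun p =>
        ⟨fun j => if hj : (j : ℕ) < n then (p.1 ⟨j, hj⟩).1 else p.2 ⟨(j : ℕ) - n, by omega⟩,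
          by
            apply (hcond _).mpr
            intro i
            have hlt : ((Fin.castLE (by omega : n ≤ 2*n) i : Fin (2*n)) : ℕ) < n := i.isLt
            rw [dif_pos hlt]
            have he : (⟨((Fin.castLE (by omega : n ≤ 2*n) i : Fin (2*n)) : ℕ), hlt⟩ : Fin n) = i :=
              Fin.ext rfl
            rw [he]
            exact (p.1 i).2⟩
      left_inv := fun v => by
        apply Subtype.ext
        funext j
        dsimp only
        by_cases hj : (j : ℕ) < n
        · rw [dif_pos hj]
          exact congrArg v.1 (Fin.ext rfl)
        · rw [dif_neg hj]
          refine congrArg v.1 (Fin.ext ?_)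
          show n + ((j : ℕ) - n) = (j : ℕ)
          omega
      right_inv := fun p => by
        refine Prod.ext ?_ ?_
        · funext i
          apply Subtype.ext
          dsimp only
          have hlt : ((Fin.castLE (by omega : n ≤ 2*n) i : Fin (2*n)) : ℕ) < n := i.isLt
          rw [dif_pos hlt]
          exact congrArg (fun t => (p.1 t).1) (Fin.ext rfl)
        · funext i
          dsimp only
          have hnlt : ¬ ((⟨n + (i:ℕ), by omega⟩ : Fin (2*n)) : ℕ) < n := by simp
          rw [dif_neg hnlt]
          refine congrArg p.2 (Fin.ext ?_)
          show (⟨n + (i:ℕ), by omega⟩ : Fin (2*n)).val - n = (i : ℕ)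
          simp }
  rw [Nat.card_congr E, Nat.card_prod, Nat.card_pi]
  congr 1
  rw [Nat.card_pi]
  simp

lemma cInv_diag_pow {n : ℕ} (π : R) (k : ℕ) (e : Fin n → ℕ) :
    cInv π k (diagP (fun i => π ^ e i) : Matrix (Fin n) (Fin (2*n)) R)
      = (∏ i : Fin n, annCard π (k + e i)) * Nat.card R ^ n := by
  rw [cInv_diagP]
  congr 1
  apply Finset.prod_congr rfl
  intro i _
  rw [annCard]
  apply Nat.card_congr
  apply Equiv.subtypeEquivRight
  intro x
  rw [← mul_assoc, ← pow_add]

end Inv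

section Lists

/-- The list of exponents of the smith diagonal. -/
def expList (r : ℕ) (ν : Fin r → ℕ) : List ℕ :=
  (List.ofFn fun j : Fin r => List.replicate (ν j) (r - 1 - (j : ℕ))).flatten

lemma expList_length (r : ℕ) (ν : Fin r → ℕ) : (expList r ν).length = ∑ j, ν j := by
  rw [expList, List.length_flatten, List.map_ofFn, List.sum_ofFn]
  simp

lemma getD_map {α β : Type*} (f : α → β) (l : List α) (i : ℕ) (d : α) :
    (l.map f).getD i (f d) = f (l.getD i d) := by
  rw [List.getD_eq_getElem?_getD, List.getD_eq_getElem?_getD, List.getElem?_map]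
  cases l[i]? <;> simp

lemma smithDiagEntries_eq_map {R : Type*} [CommRing R] (π : R) (r : ℕ) (ν : Fin r → ℕ) :
    smithDiagEntries π r ν = (expList r ν).map (π ^ ·) := by
  rw [smithDiagEntries, expList, List.map_flatten, List.map_ofFn]
  congr 1
  congr 1
  funext j
  simp [Function.comp, List.map_replicate]

lemma expList_map_sum (r : ℕ) (ν : Fin r → ℕ) (g : ℕ → ℕ) :
    ((expList r ν).map g).sum = ∑ j : Fin r, ν j * g (r - 1 - (j : ℕ)) := by
  rw [expList, List.map_flatten, List.map_ofFn, List.sum_flatten, List.map_ofFn,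
    List.sum_ofFn]
  apply Finset.sum_congr rfl
  intro j _
  simp [Function.comp, List.map_replicate, List.sum_replicate, smul_eq_mul]

lemma expList_count (r : ℕ) (ν : Fin r → ℕ) (m : ℕ) (hm : m < r) :
    (expList r ν).count m = ν ⟨r - 1 - m, by omega⟩ := by
  rw [expList, List.count_flatten, List.map_ofFn, List.sum_ofFn]
  have h : ∀ j : Fin r, ((List.replicate (ν j) (r - 1 - (j:ℕ))).count m)
      = if (⟨r - 1 - m, by omega⟩ : Fin r) = j then ν j else 0 := by
    intro j
    rw [List.count_replicate]
    by_cases hj : (⟨r - 1 - m, by omega⟩ : Fin r) = j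
    · rw [if_pos hj, if_pos]
      have hv : r - 1 - m = (j : ℕ) := congrArg Fin.val hj
      rw [beq_iff_eq]
      omega
    · rw [if_neg hj, if_neg]
      intro hc
      apply hj
      apply Fin.ext
      rw [beq_iff_eq] at hc
      show r - 1 - m = (j : ℕ)
      omega
  simp only [Function.comp]
  rw [Finset.sum_congr rfl fun j _ => h j, Finset.sum_ite_eq]
  simp

lemma expList_count_ge (r : ℕ) (ν : Fin r → ℕ) (m : ℕ) (hm : r ≤ m) :
    (expList r ν).count m = 0 := by
  rw [expList, List.count_flatten, List.map_ofFn, List.sum_ofFn]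
  apply Finset.sum_eq_zero
  intro j _
  simp only [Function.comp]
  rw [List.count_replicate, if_neg]
  intro hc
  rw [beq_iff_eq] at hc
  omega

lemma fin_sum_getD {α : Type*} (g : α → ℕ) (d : α) :
    ∀ (l : List α) (n : ℕ), l.length ≤ n →
      ∑ i : Fin n, g (l.getD (i : ℕ) d) = (l.map g).sum + (n - l.length) * g d := by
  intro l
  induction l with
  | nil =>
    intro n _
    simp [Finset.sum_const, mul_comm]
  | cons a l ih =>
    intro n hn
    match n with
    | 0 => simp at hn
    | (n' + 1) =>
      rw [Fin.sum_univ_succ]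
      have h1 : ∀ i : Fin n', (a :: l).getD ((i.succ : Fin (n'+1)) : ℕ) d = l.getD (i : ℕ) d := by
        intro i
        rw [Fin.val_succ, List.getD_cons_succ]
      rw [Finset.sum_congr rfl fun i _ => congrArg g (h1 i), ih n' (by simpa using hn)]
      simp only [Fin.val_zero, List.getD_cons_zero, List.map_cons, List.sum_cons,
        List.length_cons]
      have : n' + 1 - (l.length + 1) = n' - l.length := by omega
      rw [this]
      ring

end Lists

section Arith

/-- The exponent sum invariant. -/
def aSum (r n : ℕ) (ν : Fin r → ℕ) (k : ℕ) : ℕ :=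
  ∑ i : Fin n, min (k + (expList r ν).getD (i : ℕ) r) r

/-- The truncated moment sum. -/
def tSum (r : ℕ) (ν : Fin r → ℕ) (k : ℕ) : ℕ :=
  ∑ j : Fin r, ν j * ((j : ℕ) + 1 - k)

lemma aSum_add_tSum (r n : ℕ) (ν : Fin r → ℕ) (hn : (∑ j, ν j) ≤ n) (k : ℕ) :
    aSum r n ν k + tSum r ν k = n * r := by
  rw [aSum, fin_sum_getD (fun t => min (k + t) r) r (expList r ν) n
    (by rw [expList_length]; exact hn), expList_map_sum, expList_length]
  have hmin : ∀ j : Fin r, min (k + (r - 1 - (j : ℕ))) r = r - ((j : ℕ) + 1 - k) := by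
    intro j
    have := j.isLt
    omega
  rw [Finset.sum_congr rfl fun j (_ : j ∈ Finset.univ) => by rw [hmin j]]
  have hminr : min (k + r) r = r := by omega
  rw [hminr, tSum]
  have key : (∑ j : Fin r, ν j * (r - ((j:ℕ) + 1 - k))) + (∑ j : Fin r, ν j * ((j:ℕ) + 1 - k))
      = (∑ j, ν j) * r := by
    rw [← Finset.sum_add_distrib, Finset.sum_mul]
    apply Finset.sum_congr rfl
    intro j _
    have := j.isLt
    have h1 : (j:ℕ) + 1 - k ≤ r := by omega
    rw [← Nat.mul_add, Nat.sub_add_cancel h1]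
  have hsplit : (n - (∑ j, ν j)) * r = n * r - (∑ j, ν j) * r := Nat.sub_mul n (∑ j, ν j) r
  have hle : (∑ j, ν j) * r ≤ n * r := Nat.mul_le_mul_right r hn
  omega

lemma tSum_congr_of_aSum (r n : ℕ) (ν₁ ν₂ : Fin r → ℕ)
    (h1 : (∑ j, ν₁ j) ≤ n) (h2 : (∑ j, ν₂ j) ≤ n)
    (h : ∀ k, aSum r n ν₁ k = aSum r n ν₂ k) (k : ℕ) : tSum r ν₁ k = tSum r ν₂ k := by
  have e1 := aSum_add_tSum r n ν₁ h1 k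
  have e2 := aSum_add_tSum r n ν₂ h2 k
  have := h k
  omega

lemma nu_eq_of_tSum_eq (r : ℕ) (ν₁ ν₂ : Fin r → ℕ)
    (h : ∀ k, tSum r ν₁ k = tSum r ν₂ k) : ν₁ = ν₂ := by
  have claim : ∀ d : ℕ, ∀ j : Fin r, r - d ≤ (j : ℕ) → ν₁ j = ν₂ j := by
    intro d
    induction d with
    | zero => intro j hj; exact absurd j.isLt (by omega)
    | succ d ih =>
      intro j hj
      by_cases hd : r - d ≤ (j : ℕ)
      · exact ih j hd
      · -- j.val = r - d - 1
        have hT := h ((j : ℕ))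
        rw [tSum, tSum] at hT
        rw [← Finset.add_sum_erase _ _ (Finset.mem_univ j),
          ← Finset.add_sum_erase _ _ (Finset.mem_univ j)] at hT
        have herase : ∑ j' ∈ Finset.univ.erase j, ν₁ j' * ((j' : ℕ) + 1 - (j : ℕ))
            = ∑ j' ∈ Finset.univ.erase j, ν₂ j' * ((j' : ℕ) + 1 - (j : ℕ)) := by
          apply Finset.sum_congr rfl
          intro j' hj'
          have hne : j' ≠ j := Finset.ne_of_mem_erase hj'
          rcases lt_or_gt_of_ne (fun hc => hne (Fin.ext hc) : (j' : ℕ) ≠ (j : ℕ)) with hlt | hgt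
          · have hzero : (j' : ℕ) + 1 - (j : ℕ) = 0 := by omega
            rw [hzero, Nat.mul_zero, Nat.mul_zero]
          · have : ν₁ j' = ν₂ j' := ih j' (by omega)
            rw [this]
        rw [herase] at hT
        have hone : (j : ℕ) + 1 - (j : ℕ) = 1 := by omega
        rw [hone, Nat.mul_one, Nat.mul_one] at hT
        omega
  funext j
  exact claim r j (by omega)

end Arith

section UniqueGlue
variable {R : Type*} [CommRing R] [IsLocalRing R] [Fintype R]
variable (π : R) (hπ : Ideal.span {π} = IsLocalRing.maximalIdeal R)
  (r : ℕ) (hr : π ^ r = 0) (hr' : π ^ (r - 1) ≠ 0)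

include hπ hr hr' in
lemma nu_unique (n : ℕ) (ν₁ ν₂ : Fin r → ℕ)
    (h1 : (∑ j, ν₁ j) ≤ n) (h2 : (∑ j, ν₂ j) ≤ n)
    (hc : ∀ k, cInv π k
        (diagP (fun i : Fin n => π ^ ((expList r ν₁).getD ((i : ℕ)) r)) :
          Matrix (Fin n) (Fin (2*n)) R)
      = cInv π k
        (diagP (fun i : Fin n => π ^ ((expList r ν₂).getD ((i : ℕ)) r)) :
          Matrix (Fin n) (Fin (2*n)) R)) :
    ν₁ = ν₂ := by
  apply nu_eq_of_tSum_eq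
  apply tSum_congr_of_aSum r n _ _ h1 h2
  intro k
  have hck := hc k
  rw [cInv_diag_pow, cInv_diag_pow] at hck
  have hRpos : 0 < Nat.card R := Nat.card_pos
  have h3 : (∏ i : Fin n, annCard π (k + (expList r ν₁).getD ((i : ℕ)) r))
      = ∏ i : Fin n, annCard π (k + (expList r ν₂).getD ((i : ℕ)) r) :=
    Nat.eq_of_mul_eq_mul_right (pow_pos hRpos n) hck
  have h4 : ∀ ν : Fin r → ℕ,
      (∏ i : Fin n, annCard π (k + (expList r ν).getD ((i : ℕ)) r))
        = annCard π 1 ^ (aSum r n ν k) := by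
    intro ν
    rw [aSum, ← Finset.prod_pow_eq_pow_sum]
    exact Finset.prod_congr rfl fun i _ => annCard_eq_pow_min π hπ r hr hr' _
  rw [h4, h4] at h3
  exact Nat.pow_right_injective (annCard_one_le π r hr hr') h3

end UniqueGlue

section PermMatch

lemma list_sum_indicator (m : ℕ) : ∀ l : List ℕ,
    (l.map fun t => if t = m then 1 else 0).sum = l.count m := by
  intro l
  induction l with
  | nil => simp
  | cons a l ih =>
    rw [List.map_cons, List.sum_cons, ih, List.count_cons]
    by_cases h : a = m
    · rw [if_pos h, if_pos (beq_iff_eq.mpr h)]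
      omega
    · rw [if_neg h, if_neg (fun hc => h (beq_iff_eq.mp hc))]
      omega

lemma exists_perm_match (r n : ℕ) (hrpos : 0 < r) (e : Fin n → ℕ) (he : ∀ i, e i ≤ r) :
    ∃ ν : Fin r → ℕ, (∑ j, ν j) ≤ n ∧
      ∃ σ : Equiv.Perm (Fin n), ∀ i, (expList r ν).getD ((σ i : Fin n) : ℕ) r = e i := by
  classical
  set ν : Fin r → ℕ :=
    fun j => (Finset.univ.filter fun i : Fin n => e i = r - 1 - (j : ℕ)).card with hν
  have hsum : (∑ j, ν j) = (Finset.univ.filter fun i : Fin n => e i < r).card := by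
    rw [Finset.card_eq_sum_card_fiberwise
      (f := fun i : Fin n => (⟨r - 1 - e i, by omega⟩ : Fin r)) (t := Finset.univ)
      (fun x _ => Finset.mem_univ _)]
    apply Finset.sum_congr rfl
    intro j _
    rw [hν]
    apply congrArg Finset.card
    ext i
    simp only [Finset.mem_filter, Finset.mem_univ, true_and]
    constructor
    · intro h
      have hj := j.isLt
      have : e i < r := by omega
      refine ⟨this, Fin.ext ?_⟩
      show r - 1 - e i = (j : ℕ)
      omega
    · rintro ⟨h1, h2⟩
      have : r - 1 - e i = (j : ℕ) := congrArg Fin.val h2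
      have hj := j.isLt
      omega
  have hsum_le : (∑ j, ν j) ≤ n := by
    rw [hsum]
    exact le_trans (Finset.card_filter_le _ _) (by simp)
  have hlen : (expList r ν).length = ∑ j, ν j := expList_length r ν
  have hfib : ∀ m : ℕ, Fintype.card {i : Fin n // e i = m}
      = Fintype.card {i : Fin n // (expList r ν).getD ((i : ℕ)) r = m} := by
    intro m
    rw [Fintype.card_subtype, Fintype.card_subtype]
    have hrhs : (Finset.univ.filter fun i : Fin n =>
        (expList r ν).getD ((i : ℕ)) r = m).card
        = (expList r ν).count m + (n - ∑ j, ν j) * (if (r : ℕ) = m then 1 else 0) := by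
      rw [Finset.card_filter]
      have := fin_sum_getD (fun t => if t = m then 1 else 0) r (expList r ν) n
        (by rw [hlen]; exact hsum_le)
      rw [this, list_sum_indicator, hlen]
    rcases lt_trichotomy m r with hm | hm | hm
    · rw [hrhs, expList_count r ν m hm, if_neg (by omega), Nat.mul_zero, Nat.add_zero, hν]
      congr 1
      ext i
      simp only [Finset.mem_filter, Finset.mem_univ, true_and]
      constructor
      · intro h; omega
      · intro h; omega
    · rw [hrhs, expList_count_ge r ν m hm.ge, if_pos hm.symm, Nat.zero_add, Nat.mul_one, hm]
      have hsplit := Finset.card_filter_add_card_filter_not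
        (s := (Finset.univ : Finset (Fin n))) (p := fun i : Fin n => e i = r)
      have hneg : (Finset.univ.filter fun i : Fin n => ¬ e i = r).card
          = (Finset.univ.filter fun i : Fin n => e i < r).card := by
        apply congrArg Finset.card
        ext i
        simp only [Finset.mem_filter, Finset.mem_univ, true_and]
        have := he i
        constructor <;> (intro h; omega)
      rw [hneg] at hsplit
      rw [← hsum] at hsplit
      simp only [Finset.card_univ, Fintype.card_fin] at hsplit
      omega
    · rw [hrhs, expList_count_ge r ν m (by omega), if_neg (by omega), Nat.mul_zero,
        Nat.add_zero]
      rw [Finset.card_eq_zero, Finset.filter_eq_empty_iff]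
      intro i _
      have := he i
      omega
  refine ⟨ν, hsum_le, ?_⟩
  set Ee : Fin n → ℕ := fun i => (expList r ν).getD ((i : ℕ)) r with hEe
  set σ : Equiv.Perm (Fin n) :=
    (Equiv.sigmaFiberEquiv e).symm.trans
      ((Equiv.sigmaCongrRight fun m => (Fintype.equivOfCardEq (hfib m))).trans
        (Equiv.sigmaFiberEquiv Ee)) with hσ
  refine ⟨σ, fun i => ?_⟩
  show Ee (σ i) = e i
  have : σ i = ((Fintype.equivOfCardEq (hfib (e i))) ⟨i, rfl⟩ : {x : Fin n // Ee x = e i}).1 := rfl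
  rw [this]
  exact ((Fintype.equivOfCardEq (hfib (e i))) ⟨i, rfl⟩).2

end PermMatch

section Ext

def extPerm {n : ℕ} (σ : Equiv.Perm (Fin n)) : Equiv.Perm (Fin (2*n)) where
  toFun j := if h : (j : ℕ) < n then ⟨((σ ⟨j, h⟩ : Fin n) : ℕ), by omega⟩ else j
  invFun j := if h : (j : ℕ) < n then ⟨((σ.symm ⟨j, h⟩ : Fin n) : ℕ), by omega⟩ else j
  left_inv j := by
    dsimp only
    by_cases h : (j : ℕ) < n
    · rw [dif_pos h, dif_pos (show ((⟨((σ ⟨j, h⟩ : Fin n) : ℕ), by omega⟩ : Fin (2*n)) : ℕ) < n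
        from (σ ⟨j, h⟩).isLt)]
      apply Fin.ext
      show ((σ.symm ⟨((σ ⟨j, h⟩ : Fin n) : ℕ), _⟩ : Fin n) : ℕ) = (j : ℕ)
      rw [show (⟨((σ ⟨j, h⟩ : Fin n) : ℕ), (σ ⟨j, h⟩).isLt⟩ : Fin n) = σ ⟨j, h⟩ from Fin.ext rfl]
      rw [Equiv.symm_apply_apply]
    · rw [dif_neg h, dif_neg h]
  right_inv j := by
    dsimp only
    by_cases h : (j : ℕ) < n
    · rw [dif_pos h, dif_pos (show ((⟨((σ.symm ⟨j, h⟩ : Fin n) : ℕ), by omega⟩ : Fin (2*n)) : ℕ) < n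
        from (σ.symm ⟨j, h⟩).isLt)]
      apply Fin.ext
      show ((σ ⟨((σ.symm ⟨j, h⟩ : Fin n) : ℕ), _⟩ : Fin n) : ℕ) = (j : ℕ)
      rw [show (⟨((σ.symm ⟨j, h⟩ : Fin n) : ℕ), (σ.symm ⟨j, h⟩).isLt⟩ : Fin n) = σ.symm ⟨j, h⟩
        from Fin.ext rfl]
      rw [Equiv.apply_symm_apply]
    · rw [dif_neg h, dif_neg h]

lemma extPerm_val {n : ℕ} (σ : Equiv.Perm (Fin n)) (j : Fin (2*n)) :
    ((extPerm σ j : Fin (2*n)) : ℕ)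
      = if h : (j : ℕ) < n then ((σ ⟨j, h⟩ : Fin n) : ℕ) else (j : ℕ) := by
  show (((if h : (j : ℕ) < n then
      (⟨((σ ⟨j, h⟩ : Fin n) : ℕ), by omega⟩ : Fin (2*n)) else j) : Fin (2*n)) : ℕ) = _
  split_ifs with h <;> rfl

lemma diagP_perm {R : Type*} [CommRing R] {n : ℕ} (f : Fin n → R) (σ : Equiv.Perm (Fin n)) :
    (diagP f : Matrix (Fin n) (Fin (2*n)) R).submatrix σ (extPerm σ)
      = diagP (fun i => f (σ i)) := by
  ext i j
  rw [Matrix.submatrix_apply, diagP, diagP]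
  simp only [Matrix.of_apply]
  by_cases h : (j : ℕ) < n
  · by_cases hij : (i : ℕ) = (j : ℕ)
    · have hc : ((σ i : Fin n) : ℕ) = ((extPerm σ j : Fin (2*n)) : ℕ) := by
        rw [extPerm_val, dif_pos h]
        exact congrArg (fun t => ((σ t : Fin n) : ℕ)) (Fin.ext hij)
      rw [if_pos hc, if_pos hij]
    · rw [if_neg hij, if_neg]
      rw [extPerm_val, dif_pos h]
      intro hc
      apply hij
      have : σ i = σ ⟨j, h⟩ := Fin.ext hc
      have := σ.injective this
      exact congrArg Fin.val this
  · have hij : ¬ (i : ℕ) = (j : ℕ) := by have := i.isLt; omega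
    rw [if_neg hij, if_neg]
    rw [extPerm_val, dif_neg h]
    have := (σ i).isLt
    omega

lemma smithDiag_eq_diagP {R : Type*} [CommRing R] (π : R) (r n : ℕ) (ν : Fin r → ℕ)
    (hr : π ^ r = 0) :
    smithDiag π r n ν = diagP (fun i : Fin n => π ^ ((expList r ν).getD ((i : ℕ)) r)) := by
  ext i j
  rw [smithDiag, diagP]
  simp only [Matrix.of_apply]
  by_cases hij : (i : ℕ) = (j : ℕ)
  · rw [if_pos hij, if_pos hij, smithDiagEntries_eq_map]
    have h0 : (0 : R) = (fun t => π ^ t) r := by simp [hr]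
    rw [h0, getD_map]
  · rw [if_neg hij, if_neg hij]

end Ext

/-- Over a finite chain ring, every `n × 2n` matrix `A` is equivalent to a unique
normalized Smith normal form `D_{(n_1,…,n_r)}` with `n_1 + ⋯ + n_r ≤ n`. -/
theorem existsUnique_smith_normal_form_finite_chain_ring
    (R : Type*) [CommRing R] [Fintype R] [IsLocalRing R] [IsPrincipalIdealRing R]
    (π : R) (hπ : Ideal.span {π} = IsLocalRing.maximalIdeal R)
    (r : ℕ) (hrpos : 0 < r) (hr : π ^ r = 0) (hr' : π ^ (r - 1) ≠ 0)
    (n : ℕ) (A : Matrix (Fin n) (Fin (2 * n)) R) :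
    ∃! ν : Fin r → ℕ, (∑ i, ν i ≤ n) ∧
      ∃ (U : (Matrix (Fin n) (Fin n) R)ˣ) (V : (Matrix (Fin (2 * n)) (Fin (2 * n)) R)ˣ),
        A = U.val * smithDiag π r n ν * V.val := by
  classical
  obtain ⟨U, V, e, he, hUAV⟩ := exists_diag π hπ r hr n (2*n) A
  obtain ⟨ν, hsum, σ, hσ⟩ := exists_perm_match r n hrpos e he
  set Dν : Matrix (Fin n) (Fin (2*n)) R :=
    diagP (fun i : Fin n => π ^ ((expList r ν).getD ((i : ℕ)) r)) with hDν
  have hsd : smithDiag π r n ν = Dν := smithDiag_eq_diagP π r n ν hr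
  have hperm : Dν.submatrix σ (extPerm σ) = diagP (fun i => π ^ e i) := by
    rw [hDν, diagP_perm]
    exact congrArg (fun f : Fin n → R => (diagP f : Matrix (Fin n) (Fin (2*n)) R))
      (funext fun i => by rw [hσ i])
  have hA : A = (U⁻¹).val * (diagP (fun i => π ^ e i) : Matrix (Fin n) (Fin (2*n)) R) * (V⁻¹).val := by
    rw [← hUAV]
    rw [← Matrix.mul_assoc, ← Matrix.mul_assoc, U.inv_mul, Matrix.one_mul,
      Matrix.mul_assoc, V.mul_inv, Matrix.mul_one]
  have hsub := submatrix_eq_permL_mul_permR σ (extPerm σ) Dν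
  rw [hperm] at hsub
  refine ⟨ν, ⟨hsum, U⁻¹ * permUnitL σ, permUnitR (extPerm σ) * V⁻¹, ?_⟩, ?_⟩
  · rw [hA, hsub, hsd]
    simp only [Units.val_mul, Matrix.mul_assoc]
  · rintro ν' ⟨hsum', U', V', hA'⟩
    apply nu_unique π hπ r hr hr' n ν' ν hsum' hsum
    intro k
    have h1 : cInv π k A = cInv π k
        (diagP (fun i : Fin n => π ^ ((expList r ν').getD ((i : ℕ)) r)) :
          Matrix (Fin n) (Fin (2*n)) R) := by
      rw [hA', smithDiag_eq_diagP π r n ν' hr]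
      exact cInv_unit_mul π k _ U' V'
    have h2 : cInv π k A = cInv π k Dν := by
      have hA2 : A = (U⁻¹ * permUnitL σ).val * Dν * (permUnitR (extPerm σ) * V⁻¹).val := by
        rw [hA, hsub]
        simp only [Units.val_mul, Matrix.mul_assoc]
      rw [hA2]
      exact cInv_unit_mul π k Dν _ _
    rw [← h1, h2, hDν]
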